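/- Let G be a connected graph with Perron vector x, and let u, v be vertices with x_u ≥ x_v. Let N be a nonempty set of neighbors of v which are not neighbors of u and do not include u. Then the graph G′ obtained from G by deleting all edges vw with w ∈ N and adding all edges uw with w ∈ N satisfies ρ(G′) > ρ(G). -/

import Mathlib

open Matrix

lemma rayleigh_aux {n : Type*} [Fintype n] [DecidableEq n] {A : Matrix n n ℝ}
    (hA : A.IsHermitian) (x : n → ℝ) (hx : ∑ i, x i ^ 2 = 1) :
    x ⬝ᵥ A *ᵥ x ≤ sSup (spectrum ℝ A) ∧
      (x ⬝ᵥ A *ᵥ x = sSup (spectrum ℝ A) → A *ᵥ x = sSup (spectrum ℝ A) • x) := by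
  classical
  set B : Matrix n n ℝ := (hA.eigenvectorUnitary : Matrix n n ℝ) with hBdef
  set lam := hA.eigenvalues with hlamdef
  set M := sSup (spectrum ℝ A) with hM
  have hlam : ∀ i, lam i ≤ M := by
    intro i
    rw [hM, hA.spectrum_real_eq_range_eigenvalues]
    exact le_csSup (Set.finite_range _).bddAbove ⟨i, rfl⟩
  have hBB : B * star B = 1 := Unitary.coe_mul_star_self hA.eigenvectorUnitary
  set y : n → ℝ := star B *ᵥ x with hy
  have hAx : A *ᵥ x = B *ᵥ (Matrix.diagonal lam *ᵥ y) := by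
    conv_lhs => rw [hA.spectral_theorem]
    simp only [← Matrix.mulVec_mulVec, hy, hBdef, hlamdef]
    norm_num [Function.comp_def]
    simp [Matrix.mul_assoc]
  have key2 : ∀ z, x ⬝ᵥ (B *ᵥ z) = y ⬝ᵥ z := by
    intro z
    rw [Matrix.dotProduct_mulVec]
    congr 1
    ext j
    simp [hy, Matrix.mulVec, Matrix.vecMul, dotProduct, Matrix.star_apply, mul_comm]
  have hBy : B *ᵥ y = x := by
    rw [hy, Matrix.mulVec_mulVec, hBB, Matrix.one_mulVec]
  have hyy : y ⬝ᵥ y = 1 := by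
    have h1 : x ⬝ᵥ (B *ᵥ y) = y ⬝ᵥ y := key2 y
    rw [hBy] at h1
    rw [← h1, ← hx]
    simp [dotProduct, sq]
  have hyy' : ∑ i, y i * y i = 1 := hyy
  have hQ : x ⬝ᵥ A *ᵥ x = ∑ i, y i * (lam i * y i) := by
    rw [hAx, key2]
    simp [dotProduct, Matrix.mulVec_diagonal]
  have hle : x ⬝ᵥ A *ᵥ x ≤ M := by
    rw [hQ]
    calc ∑ i, y i * (lam i * y i) ≤ ∑ i, M * (y i * y i) := by
          apply Finset.sum_le_sum
          intro i _
          nlinarith [hlam i, sq_nonneg (y i)]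
      _ = M := by rw [← Finset.mul_sum, hyy', mul_one]
  refine ⟨hle, fun heq => ?_⟩
  have hnn : ∀ i ∈ Finset.univ, 0 ≤ (M - lam i) * (y i * y i) := by
    intro i _
    have := hlam i
    nlinarith [sq_nonneg (y i)]
  have hsum0 : ∑ i, (M - lam i) * (y i * y i) = 0 := by
    have h2 : ∑ i, (M - lam i) * (y i * y i) = M * ∑ i, (y i * y i) - ∑ i, y i * (lam i * y i) := by
      rw [Finset.mul_sum, ← Finset.sum_sub_distrib]
      apply Finset.sum_congr rfl
      intro i _
      ring
    rw [h2, hyy', ← hQ, heq, mul_one, sub_self]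
  have hzero := (Finset.sum_eq_zero_iff_of_nonneg hnn).mp hsum0
  have hDy : Matrix.diagonal lam *ᵥ y = M • y := by
    ext i
    have h0 := hzero i (Finset.mem_univ i)
    rcases mul_eq_zero.mp h0 with h | h
    · have : lam i = M := by linarith
      simp [Matrix.mulVec_diagonal, this]
    · have : y i = 0 := by nlinarith
      simp [Matrix.mulVec_diagonal, this]
  rw [hAx, hDy, Matrix.mulVec_smul, hBy]



lemma adjMatrix_isHermitian {V : Type*} [Fintype V] [DecidableEq V] (G : SimpleGraph V)
    [DecidableRel G.Adj] : (G.adjMatrix ℝ).IsHermitian := by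
  unfold Matrix.IsHermitian
  ext i j
  simp [Matrix.conjTranspose_apply, SimpleGraph.adj_comm]


/-- The spectral radius (largest adjacency eigenvalue) of a finite simple graph. -/
noncomputable def specRad {V : Type*} [Finite V] (G : SimpleGraph V) : ℝ :=
  letI := Fintype.ofFinite V
  letI := Classical.decEq V
  letI := Classical.decRel G.Adj
  sSup (spectrum ℝ (G.adjMatrix ℝ))


lemma specRad_eq {V : Type*} [Fintype V] [DecidableEq V] (G : SimpleGraph V)
    [DecidableRel G.Adj] :
    specRad G = sSup (spectrum ℝ (G.adjMatrix ℝ)) := by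
  unfold specRad
  congr!

theorem stmt_12 {V : Type*} [Fintype V] [DecidableEq V] (G : SimpleGraph V)
    [DecidableRel G.Adj] (hG : G.Connected)
    (x : V → ℝ) (hxpos : ∀ w, 0 < x w) (hxunit : ∑ w, x w ^ 2 = 1)
    (hx : (G.adjMatrix ℝ).mulVec x = specRad G • x)
    (u v : V) (huv : x v ≤ x u)
    (N : Set V) (hN : N.Nonempty)
    (hNsub : N ⊆ G.neighborSet v \ (G.neighborSet u ∪ {u})) :
    specRad G <
      specRad ((G.deleteEdges {e | ∃ w ∈ N, e = s(v, w)}) ⊔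
        SimpleGraph.fromEdgeSet {e | ∃ w ∈ N, e = s(u, w)}) := by
  classical
  set G' := (G.deleteEdges {e | ∃ w ∈ N, e = s(v, w)}) ⊔
      SimpleGraph.fromEdgeSet {e | ∃ w ∈ N, e = s(u, w)} with hG'def
  letI : DecidableRel G'.Adj := Classical.decRel _
  -- basic facts
  have hadjvw : ∀ w ∈ N, G.Adj v w := fun w hw => (hNsub hw).1
  have hnadjuw : ∀ w ∈ N, ¬ G.Adj u w := fun w hw h => (hNsub hw).2 (Or.inl h)
  have hwu : ∀ w ∈ N, w ≠ u := fun w hw h => (hNsub hw).2 (Or.inr h)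
  have hadjwv : ∀ w ∈ N, G.Adj w v := fun w hw => (hadjvw w hw).symm
  have hnadjwu : ∀ w ∈ N, ¬ G.Adj w u := fun w hw h => hnadjuw w hw h.symm
  have hvN : v ∉ N := fun h => G.irrefl (hadjvw v h)
  have huN : u ∉ N := fun h => hwu u h rfl
  obtain ⟨w₀, hw₀⟩ := hN
  have huv' : u ≠ v := by
    rintro rfl
    exact hnadjuw w₀ hw₀ (hadjvw w₀ hw₀)
  -- adjacency characterization
  have hadj : ∀ a b, G'.Adj a b ↔
      ((G.Adj a b ∧ ¬(a = v ∧ b ∈ N) ∧ ¬(b = v ∧ a ∈ N)) ∨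
        ((a = u ∧ b ∈ N) ∨ (b = u ∧ a ∈ N))) := by
    intro a b
    rw [hG'def]
    simp only [SimpleGraph.sup_adj, SimpleGraph.deleteEdges_adj, SimpleGraph.fromEdgeSet_adj,
      Set.mem_setOf_eq]
    constructor
    · rintro (⟨hab, hD⟩ | ⟨⟨w, hwN, hs⟩, hne⟩)
      · refine Or.inl ⟨hab, ?_, ?_⟩
        · rintro ⟨rfl, hb⟩
          exact hD ⟨b, hb, by rw [Sym2.eq_iff]; tauto⟩
        · rintro ⟨rfl, ha⟩
          exact hD ⟨a, ha, by rw [Sym2.eq_iff]; tauto⟩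
      · rw [Sym2.eq_iff] at hs
        rcases hs with ⟨rfl, rfl⟩ | ⟨rfl, rfl⟩
        · exact Or.inr (Or.inl ⟨rfl, hwN⟩)
        · exact Or.inr (Or.inr ⟨rfl, hwN⟩)
    · rintro (⟨hab, h1, h2⟩ | ⟨rfl, hb⟩ | ⟨rfl, ha⟩)
      · refine Or.inl ⟨hab, ?_⟩
        rintro ⟨w, hwN, hs⟩
        rw [Sym2.eq_iff] at hs
        rcases hs with ⟨rfl, rfl⟩ | ⟨rfl, rfl⟩
        · exact h1 ⟨rfl, hwN⟩
        · exact h2 ⟨rfl, hwN⟩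
      · exact Or.inr ⟨⟨b, hb, by rw [Sym2.eq_iff]; tauto⟩, fun h => huN (h ▸ hb)⟩
      · exact Or.inr ⟨⟨a, ha, by rw [Sym2.eq_iff]; tauto⟩, fun h => huN (h ▸ ha)⟩
  -- entry formula
  have hentry : ∀ a b, (G'.adjMatrix ℝ) a b = (G.adjMatrix ℝ) a b
      + (if a = u ∧ b ∈ N then (1:ℝ) else 0) + (if b = u ∧ a ∈ N then (1:ℝ) else 0)
      - (if a = v ∧ b ∈ N then (1:ℝ) else 0) - (if b = v ∧ a ∈ N then (1:ℝ) else 0) := by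
    intro a b
    simp only [SimpleGraph.adjMatrix_apply, hadj a b]
    clear hadj hx hG hxunit hxpos huv hw₀
    clear_value G'
    clear this hG'def G'
    by_cases haN : a ∈ N <;> by_cases hbN : b ∈ N <;>
      by_cases hau : a = u <;> by_cases hav : a = v <;>
      by_cases hbu : b = u <;> by_cases hbv : b = v <;>
      simp_all <;> norm_num
  -- the finset of N and the sum X
  set s : Finset V := Finset.univ.filter (fun w => w ∈ N) with hsdef
  set X : ℝ := ∑ w ∈ s, x w with hXdef
  have hsne : s.Nonempty := ⟨w₀, by simp [hsdef, hw₀]⟩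
  have hXpos : 0 < X := Finset.sum_pos (fun w _ => hxpos w) hsne
  -- mulVec formula
  have hmul : ∀ a, (G'.adjMatrix ℝ *ᵥ x) a = (G.adjMatrix ℝ *ᵥ x) a
      + (if a = u then X else 0) + (if a ∈ N then x u else 0)
      - (if a = v then X else 0) - (if a ∈ N then x v else 0) := by
    intro a
    simp only [Matrix.mulVec, dotProduct, hentry, add_mul, sub_mul, ite_mul, one_mul,
      zero_mul]
    rw [Finset.sum_sub_distrib, Finset.sum_sub_distrib, Finset.sum_add_distrib,
      Finset.sum_add_distrib]
    have e1 : ∑ b, (if a = u ∧ b ∈ N then x b else 0) = (if a = u then X else 0) := by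
      by_cases h : a = u
      · simp only [h, true_and, if_true, hXdef, hsdef]
        rw [Finset.sum_filter]
      · simp [h]
    have e2 : ∑ b, (if b = u ∧ a ∈ N then x b else 0) = (if a ∈ N then x u else 0) := by
      by_cases h : a ∈ N
      · simp [h, Finset.sum_ite_eq']
      · simp [h]
    have e3 : ∑ b, (if a = v ∧ b ∈ N then x b else 0) = (if a = v then X else 0) := by
      by_cases h : a = v
      · simp only [h, true_and, if_true, hXdef, hsdef]
        rw [Finset.sum_filter]
      · simp [h]
    have e4 : ∑ b, (if b = v ∧ a ∈ N then x b else 0) = (if a ∈ N then x v else 0) := by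
      by_cases h : a ∈ N
      · simp [h, Finset.sum_ite_eq']
      · simp [h]
    rw [e1, e2, e3, e4]
  -- Rayleigh quotient of G
  have hQA : x ⬝ᵥ (G.adjMatrix ℝ *ᵥ x) = specRad G := by
    rw [hx]
    simp only [dotProduct, Pi.smul_apply, smul_eq_mul]
    rw [show ∑ i, x i * (specRad G * x i) = specRad G * ∑ i, x i ^ 2 from by
      rw [Finset.mul_sum]; apply Finset.sum_congr rfl; intros; ring]
    rw [hxunit, mul_one]
  -- Rayleigh quotient of G'
  have hQ' : x ⬝ᵥ (G'.adjMatrix ℝ *ᵥ x) = specRad G + 2 * (x u - x v) * X := by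
    have expand : x ⬝ᵥ (G'.adjMatrix ℝ *ᵥ x) = ∑ a, x a * ((G.adjMatrix ℝ *ᵥ x) a
        + (if a = u then X else 0) + (if a ∈ N then x u else 0)
        - (if a = v then X else 0) - (if a ∈ N then x v else 0)) := by
      simp only [dotProduct]
      apply Finset.sum_congr rfl
      intro a _
      rw [hmul a]
    rw [expand]
    simp only [mul_add, mul_sub]
    rw [Finset.sum_sub_distrib, Finset.sum_sub_distrib, Finset.sum_add_distrib,
      Finset.sum_add_distrib]
    have f1 : ∑ a, x a * (if a = u then X else 0) = x u * X := by
      simp [mul_ite, mul_zero, Finset.sum_ite_eq']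
    have f2 : ∑ a, x a * (if a ∈ N then x u else 0) = X * x u := by
      simp only [mul_ite, mul_zero]
      rw [← Finset.sum_filter, ← Finset.sum_mul]
    have f3 : ∑ a, x a * (if a = v then X else 0) = x v * X := by
      simp [mul_ite, mul_zero, Finset.sum_ite_eq']
    have f4 : ∑ a, x a * (if a ∈ N then x v else 0) = X * x v := by
      simp only [mul_ite, mul_zero]
      rw [← Finset.sum_filter, ← Finset.sum_mul]
    have f0 : ∑ a, x a * (G.adjMatrix ℝ *ᵥ x) a = specRad G := hQA
    rw [f1, f2, f3, f4, f0]
    ring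
  -- finish
  have hH' : (G'.adjMatrix ℝ).IsHermitian := adjMatrix_isHermitian G'
  obtain ⟨hle, heqc⟩ := rayleigh_aux hH' x hxunit
  rw [specRad_eq G']
  by_contra hcon
  push_neg at hcon
  have h1 : specRad G + 2 * (x u - x v) * X ≤ sSup (spectrum ℝ (G'.adjMatrix ℝ)) := by
    rw [← hQ']
    exact hle
  have h2 : (0:ℝ) ≤ 2 * (x u - x v) * X := by nlinarith
  have h3 : sSup (spectrum ℝ (G'.adjMatrix ℝ)) = specRad G := le_antisymm hcon (by linarith)
  have h4 : x ⬝ᵥ (G'.adjMatrix ℝ *ᵥ x) = sSup (spectrum ℝ (G'.adjMatrix ℝ)) := by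
    rw [hQ', h3]
    have : 2 * (x u - x v) * X ≤ 0 := by
      have := h1
      rw [h3] at this
      linarith
    linarith
  have heig := heqc h4
  have hxv : (G.adjMatrix ℝ *ᵥ x) v = specRad G * x v := by rw [hx]; simp
  have h5 : (G'.adjMatrix ℝ *ᵥ x) v = specRad G * x v - X := by
    rw [hmul v, hxv]
    simp [Ne.symm huv', hvN]
  rw [heig] at h5
  simp only [Pi.smul_apply, smul_eq_mul, h3] at h5
  linarith
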